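/- arXiv:2401.11299 — 2 statements merged into one kernel-verified Lean document; each statement's English description precedes it below -/
import Mathlib

section
/- Let 0 ≠ M ∈ ⋀X, with inner grade i = dim isp(M) and outer grade o = dim osp(M). Then the homogeneous components of M of grades i, i+1, o−1 and o are simple (each is a blade, possibly zero). -/
/-!
Setup: `X` is a finite-dimensional real inner product space, `⋀X` its exterior
algebra.  We hypothesize a bilinear form `innE` on the exterior algebra which makes
the wedges of any orthonormal basis of `X` (over increasing index sets) orthonormal
— this characterizes the inner product of the paper — and a bilinear left
contraction `lcontr` adjoint to the wedge product: `⟨M⌟N, L⟩ = ⟨N, M∧L⟩`.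
-/

noncomputable section

open ExteriorAlgebra

/-- The wedge product `v_{i₁} ∧ ⋯ ∧ v_{i_p}` of the vectors `v i`, `i ∈ s`,
taken in increasing order of the indices. -/
def wedgeOf {X : Type*} [AddCommGroup X] [Module ℝ X] {n : ℕ}
    (v : Fin n → X) (s : Finset (Fin n)) : ExteriorAlgebra ℝ X :=
  ((s.sort (· ≤ ·)).map fun i => ι ℝ (v i)).prod

/-- The inner space `isp M = {v : v ∧ M = 0}`. -/
def isp {X : Type*} [AddCommGroup X] [Module ℝ X]
    (M : ExteriorAlgebra ℝ X) : Submodule ℝ X where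
  carrier := {x | ι ℝ x * M = 0}
  add_mem' := by
    intro a b ha hb
    simp only [Set.mem_setOf_eq, map_add, add_mul] at *
    rw [ha, hb, add_zero]
  zero_mem' := by simp
  smul_mem' := by
    intro c x hx
    simp only [Set.mem_setOf_eq, map_smul, smul_mul_assoc] at *
    rw [hx, smul_zero]

/-- The space `{v : v ⌟ M = 0}`, whose orthogonal complement is the outer space. -/
def ospKer {X : Type*} [NormedAddCommGroup X] [InnerProductSpace ℝ X]
    (lcontr : ExteriorAlgebra ℝ X →ₗ[ℝ] ExteriorAlgebra ℝ X →ₗ[ℝ] ExteriorAlgebra ℝ X)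
    (M : ExteriorAlgebra ℝ X) : Submodule ℝ X where
  carrier := {x | lcontr (ι ℝ x) M = 0}
  add_mem' := by
    intro a b ha hb
    simp only [Set.mem_setOf_eq, map_add, LinearMap.add_apply] at *
    rw [ha, hb, add_zero]
  zero_mem' := by simp
  smul_mem' := by
    intro c x hx
    simp only [Set.mem_setOf_eq, map_smul, LinearMap.smul_apply] at *
    rw [hx, smul_zero]

/-- The outer space `osp M = {v : v ⌟ M = 0}ᗮ`. -/
def osp {X : Type*} [NormedAddCommGroup X] [InnerProductSpace ℝ X]
    (lcontr : ExteriorAlgebra ℝ X →ₗ[ℝ] ExteriorAlgebra ℝ X →ₗ[ℝ] ExteriorAlgebra ℝ X)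
    (M : ExteriorAlgebra ℝ X) : Submodule ℝ X :=
  (ospKer lcontr M)ᗮ

/-- `innE` is the inner product of `⋀X`: for every orthonormal basis of `X`, the
wedges of basis vectors over increasing index sets form an orthonormal family. -/
def InnerOK {X : Type*} [NormedAddCommGroup X] [InnerProductSpace ℝ X]
    (innE : ExteriorAlgebra ℝ X →ₗ[ℝ] ExteriorAlgebra ℝ X →ₗ[ℝ] ℝ) : Prop :=
  ∀ (m : ℕ) (w : OrthonormalBasis (Fin m) ℝ X) (s t : Finset (Fin m)),
    innE (wedgeOf (⇑w) s) (wedgeOf (⇑w) t) = if s = t then 1 else 0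

/-- `lcontr` is the left contraction: `⟨M ⌟ N, L⟩ = ⟨N, M ∧ L⟩`. -/
def ContrOK {X : Type*} [NormedAddCommGroup X] [InnerProductSpace ℝ X]
    (innE : ExteriorAlgebra ℝ X →ₗ[ℝ] ExteriorAlgebra ℝ X →ₗ[ℝ] ℝ)
    (lcontr : ExteriorAlgebra ℝ X →ₗ[ℝ] ExteriorAlgebra ℝ X →ₗ[ℝ] ExteriorAlgebra ℝ X) :
    Prop :=
  ∀ M N L : ExteriorAlgebra ℝ X, innE (lcontr M N) L = innE N (M * L)


/-- Projection onto the grade-`p` homogeneous component of the exterior algebra. -/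
def gradeProj {X : Type*} [AddCommGroup X] [Module ℝ X] (p : ℕ) :
    ExteriorAlgebra ℝ X →ₗ[ℝ] ExteriorAlgebra ℝ X :=
  GradedAlgebra.proj (fun i : ℕ => ⋀[ℝ]^i X) p

/-- The bottom grade: least `p` with `⟨M⟩_p ≠ 0`. -/
noncomputable def bgrade {X : Type*} [AddCommGroup X] [Module ℝ X]
    (M : ExteriorAlgebra ℝ X) : ℕ :=
  sInf {p | gradeProj p M ≠ 0}

/-- The top grade: greatest `p` with `⟨M⟩_p ≠ 0`. -/
noncomputable def tgrade {X : Type*} [AddCommGroup X] [Module ℝ X]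
    (M : ExteriorAlgebra ℝ X) : ℕ :=
  sSup {p | gradeProj p M ≠ 0}

/-- A blade (simple multivector): a scalar multiple of an exterior product
`v₁ ∧ ⋯ ∧ v_p` of vectors of `X` (`p ≥ 0`; scalars and `0` are blades). -/
def IsBlade {X : Type*} [AddCommGroup X] [Module ℝ X]
    (M : ExteriorAlgebra ℝ X) : Prop :=
  ∃ (c : ℝ) (p : ℕ) (f : Fin p → X), M = c • (List.ofFn fun i => ι ℝ (f i)).prod

namespace ECS

variable {X : Type*} [AddCommGroup X] [Module ℝ X]

/-- Shorthand for the product of `ι`'s over a list of indices. -/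
def lprod {n : ℕ} (v : Fin n → X) (l : List (Fin n)) : ExteriorAlgebra ℝ X :=
  (l.map fun i => ι ℝ (v i)).prod

@[simp] lemma lprod_nil {n : ℕ} (v : Fin n → X) : lprod v [] = 1 := rfl

lemma lprod_cons {n : ℕ} (v : Fin n → X) (a : Fin n) (l : List (Fin n)) :
    lprod v (a :: l) = ι ℝ (v a) * lprod v l := by
  simp [lprod]

lemma ι_mul_ι (x y : X) : ι ℝ x * ι ℝ y = -(ι ℝ y * ι ℝ x) :=
  eq_neg_of_add_eq_zero_left (ι_add_mul_swap x y)

lemma ι_mul_lprod_of_mem {n : ℕ} (v : Fin n → X) (k : Fin n) :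
    ∀ (l : List (Fin n)), k ∈ l → ι ℝ (v k) * lprod v l = 0 := by
  intro l
  induction l with
  | nil => simp
  | cons a t ih =>
    intro hk
    rw [lprod_cons, ← mul_assoc, ι_mul_ι, neg_mul, mul_assoc]
    rcases List.mem_cons.mp hk with h | h
    · subst h
      rw [← mul_assoc, ExteriorAlgebra.ι_sq_zero, zero_mul, neg_zero]
    · rw [ih h, mul_zero, neg_zero]

lemma ι_mul_lprod_orderedInsert {n : ℕ} (v : Fin n → X) (k : Fin n) :
    ∀ (l : List (Fin n)), ∃ ε : ℝ, (ε = 1 ∨ ε = -1) ∧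
      ι ℝ (v k) * lprod v l = ε • lprod v (l.orderedInsert (· ≤ ·) k) := by
  intro l
  induction l with
  | nil => exact ⟨1, Or.inl rfl, by simp [lprod]⟩
  | cons a t ih =>
    by_cases h : k ≤ a
    · exact ⟨1, Or.inl rfl, by simp [List.orderedInsert, h, lprod_cons, lprod]⟩
    · obtain ⟨ε, hε, hmul⟩ := ih
      refine ⟨-ε, by rcases hε with h'|h' <;> simp [h'], ?_⟩
      rw [List.orderedInsert, if_neg h, lprod_cons, lprod_cons, ← mul_assoc, ι_mul_ι,
        neg_mul, mul_assoc, hmul, mul_smul_comm, neg_smul]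

end ECS
namespace ECS

variable {X : Type*} [AddCommGroup X] [Module ℝ X]

lemma wedgeOf_eq_lprod {n : ℕ} (v : Fin n → X) (s : Finset (Fin n)) :
    wedgeOf v s = lprod v (s.sort (· ≤ ·)) := rfl

@[simp] lemma wedgeOf_empty {n : ℕ} (v : Fin n → X) : wedgeOf v (∅ : Finset (Fin n)) = 1 := by
  simp [wedgeOf]

lemma sort_insert_eq {n : ℕ} {k : Fin n} {s : Finset (Fin n)} (hk : k ∉ s) :
    (insert k s).sort (· ≤ ·) = (s.sort (· ≤ ·)).orderedInsert (· ≤ ·) k := by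
  refine List.Perm.eq_of_pairwise' (Finset.pairwise_sort _ _)
    ((Finset.pairwise_sort s _).orderedInsert k _) ?_
  refine ((Finset.sort_perm_toList _ _).trans ((Finset.toList_insert hk).trans ?_)).trans
    (List.perm_orderedInsert _ k _).symm
  exact List.Perm.cons k (Finset.sort_perm_toList s _).symm

lemma ι_mul_wedgeOf_of_mem {n : ℕ} (v : Fin n → X) {k : Fin n} {s : Finset (Fin n)}
    (hk : k ∈ s) : ι ℝ (v k) * wedgeOf v s = 0 :=
  ι_mul_lprod_of_mem v k _ ((Finset.mem_sort _).mpr hk)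

lemma ι_mul_wedgeOf_of_not_mem {n : ℕ} (v : Fin n → X) {k : Fin n} {s : Finset (Fin n)}
    (hk : k ∉ s) : ∃ ε : ℝ, (ε = 1 ∨ ε = -1) ∧
      ι ℝ (v k) * wedgeOf v s = ε • wedgeOf v (insert k s) := by
  obtain ⟨ε, hε, hmul⟩ := ι_mul_lprod_orderedInsert v k (s.sort (· ≤ ·))
  exact ⟨ε, hε, by rw [wedgeOf_eq_lprod, hmul, wedgeOf_eq_lprod, sort_insert_eq hk]⟩

lemma sort_insert_top {n : ℕ} {k : Fin n} {s : Finset (Fin n)} (hk : ∀ j ∈ s, j < k) :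
    (insert k s).sort (· ≤ ·) = s.sort (· ≤ ·) ++ [k] := by
  have hks : k ∉ s := fun h => lt_irrefl k (hk k h)
  refine (fun hp hs => List.Perm.eq_of_pairwise' (Finset.pairwise_sort _ _) hs hp) ?_ ?_
  · refine ((Finset.sort_perm_toList _ _).trans ((Finset.toList_insert hks).trans ?_)).trans
      (List.perm_append_singleton k _).symm
    exact List.Perm.cons k (Finset.sort_perm_toList s _).symm
  · rw [List.pairwise_append]
    refine ⟨Finset.pairwise_sort s _, List.pairwise_singleton _ _, ?_⟩
    intro x hx y hy
    rw [List.mem_singleton] at hy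
    subst hy
    exact (hk x ((Finset.mem_sort _).mp hx)).le

lemma wedgeOf_insert_top {n : ℕ} (v : Fin n → X) {k : Fin n} {s : Finset (Fin n)}
    (hk : ∀ j ∈ s, j < k) :
    wedgeOf v (insert k s) = wedgeOf v s * ι ℝ (v k) := by
  rw [wedgeOf, sort_insert_top hk, List.map_append, List.prod_append,
    List.map_singleton, List.prod_singleton]
  rfl

lemma lprod_mem_exteriorPower {n : ℕ} (v : Fin n → X) :
    ∀ (l : List (Fin n)), lprod v l ∈ ⋀[ℝ]^(l.length) X := by
  intro l
  induction l with
  | nil =>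
    show (1 : ExteriorAlgebra ℝ X) ∈ ⋀[ℝ]^0 X
    rw [exteriorPower, pow_zero]
    exact Submodule.one_le.mp le_rfl
  | cons a t ih =>
    rw [lprod_cons]
    have : (a :: t).length = 1 + t.length := by simp [Nat.add_comm]
    rw [this, exteriorPower, pow_add, pow_one]
    exact Submodule.mul_mem_mul (LinearMap.mem_range_self _ _) ih

lemma wedgeOf_mem_exteriorPower {n : ℕ} (v : Fin n → X) (s : Finset (Fin n)) :
    wedgeOf v s ∈ ⋀[ℝ]^(s.card) X := by
  have := lprod_mem_exteriorPower v (s.sort (· ≤ ·))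
  rwa [Finset.length_sort] at this

lemma gradeProj_wedgeOf {n : ℕ} (v : Fin n → X) (s : Finset (Fin n)) (p : ℕ) :
    gradeProj p (wedgeOf v s) = if s.card = p then wedgeOf v s else 0 := by
  rw [gradeProj, GradedAlgebra.proj_apply]
  split_ifs with h
  · subst h
    exact DirectSum.decompose_of_mem_same _ (wedgeOf_mem_exteriorPower v s)
  · exact DirectSum.decompose_of_mem_ne _ (wedgeOf_mem_exteriorPower v s) h

lemma gradeProj_of_mem {p : ℕ} {w : ExteriorAlgebra ℝ X} (hw : w ∈ ⋀[ℝ]^p X) :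
    gradeProj p w = w := by
  rw [gradeProj, GradedAlgebra.proj_apply]
  exact DirectSum.decompose_of_mem_same _ hw

lemma gradeProj_mem (p : ℕ) (w : ExteriorAlgebra ℝ X) : gradeProj p w ∈ ⋀[ℝ]^p X := by
  rw [gradeProj, GradedAlgebra.proj_apply]
  exact SetLike.coe_mem _

end ECS
namespace ECS

section SpanPart
variable {X : Type*} [AddCommGroup X] [Module ℝ X]

lemma span_wedgeOf {n : ℕ} (v : Fin n → X) (hv : Submodule.span ℝ (Set.range v) = ⊤) :
    Submodule.span ℝ (Set.range (wedgeOf v)) = ⊤ := by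
  classical
  set S := Submodule.span ℝ (Set.range (wedgeOf v)) with hS
  have hw : ∀ s, wedgeOf v s ∈ S := fun s => Submodule.subset_span ⟨s, rfl⟩
  have h1 : (1 : ExteriorAlgebra ℝ X) ∈ S := by simpa using hw ∅
  have hιk : ∀ (k : Fin n) (m), m ∈ S → ι ℝ (v k) * m ∈ S := by
    intro k m hm
    induction hm using Submodule.span_induction with
    | mem x hx =>
      obtain ⟨s, rfl⟩ := hx
      by_cases hks : k ∈ s
      · rw [ι_mul_wedgeOf_of_mem v hks]; exact S.zero_mem
      · obtain ⟨ε, _, h⟩ := ι_mul_wedgeOf_of_not_mem v hks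
        rw [h]; exact S.smul_mem _ (hw _)
    | zero => rw [mul_zero]; exact S.zero_mem
    | add x y _ _ hx hy => rw [mul_add]; exact S.add_mem hx hy
    | smul c x _ hx => rw [mul_smul_comm]; exact S.smul_mem _ hx
  have hιx : ∀ (x : X) (m), m ∈ S → ι ℝ x * m ∈ S := by
    intro x m hm
    have hx : x ∈ Submodule.span ℝ (Set.range v) := by rw [hv]; trivial
    induction hx using Submodule.span_induction with
    | mem y hy => obtain ⟨k, rfl⟩ := hy; exact hιk k m hm
    | zero => rw [map_zero, zero_mul]; exact S.zero_mem
    | add y z _ _ hy hz => rw [map_add, add_mul]; exact S.add_mem hy hz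
    | smul c y _ hy => rw [map_smul, smul_mul_assoc]; exact S.smul_mem _ hy
  have hlp : ∀ (l : List (Fin n)) (m), m ∈ S → lprod v l * m ∈ S := by
    intro l
    induction l with
    | nil => intro m hm; simpa [lprod] using hm
    | cons a t ih => intro m hm; rw [lprod_cons, mul_assoc]; exact hιx _ _ (ih m hm)
  have hmul : ∀ (m m' : ExteriorAlgebra ℝ X), m ∈ S → m' ∈ S → m * m' ∈ S := by
    intro m m' hm hm'
    induction hm using Submodule.span_induction with
    | mem x hx => obtain ⟨s, rfl⟩ := hx; exact hlp _ _ hm'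
    | zero => rw [zero_mul]; exact S.zero_mem
    | add x y _ _ hx hy => rw [add_mul]; exact S.add_mem hx hy
    | smul c x _ hx => rw [smul_mul_assoc]; exact S.smul_mem _ hx
  rw [eq_top_iff]
  intro a _
  refine ExteriorAlgebra.induction (fun r => ?_) (fun x => ?_)
    (fun a b ha hb => hmul _ _ ha hb) (fun a b ha hb => S.add_mem ha hb) a
  · rw [Algebra.algebraMap_eq_smul_one]; exact S.smul_mem _ h1
  · simpa using hιx x 1 h1

end SpanPart

section BasisPart
variable {X : Type*} [NormedAddCommGroup X] [InnerProductSpace ℝ X]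
variable (innE : ExteriorAlgebra ℝ X →ₗ[ℝ] ExteriorAlgebra ℝ X →ₗ[ℝ] ℝ)

lemma wedgeOf_linearIndependent (hinn : InnerOK innE) {n : ℕ}
    (b : OrthonormalBasis (Fin n) ℝ X) :
    LinearIndependent ℝ (fun s : Finset (Fin n) => wedgeOf ⇑b s) := by
  rw [Fintype.linearIndependent_iff]
  intro g hg t
  have h := congrArg (fun z => innE z (wedgeOf (⇑b) t)) hg
  simp only [map_sum, map_smul, LinearMap.sum_apply, LinearMap.smul_apply, smul_eq_mul,
    hinn n b, mul_ite, mul_one, mul_zero, map_zero, LinearMap.zero_apply] at h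
  rwa [Finset.sum_ite_eq' Finset.univ t g, if_pos (Finset.mem_univ t)] at h

/-- The basis of the exterior algebra given by the wedges of an orthonormal basis. -/
noncomputable def basisWedge (hinn : InnerOK innE) {n : ℕ}
    (b : OrthonormalBasis (Fin n) ℝ X) :
    Module.Basis (Finset (Fin n)) ℝ (ExteriorAlgebra ℝ X) :=
  Module.Basis.mk (wedgeOf_linearIndependent innE hinn b)
    (by
      rw [span_wedgeOf ⇑b (by rw [← OrthonormalBasis.coe_toBasis b]; exact b.toBasis.span_eq)]
      )

@[simp] lemma basisWedge_apply (hinn : InnerOK innE) {n : ℕ}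
    (b : OrthonormalBasis (Fin n) ℝ X) (s : Finset (Fin n)) :
    basisWedge innE hinn b s = wedgeOf ⇑b s :=
  Module.Basis.mk_apply _ _ _

end BasisPart

end ECS
namespace ECS

section ReprPart
variable {X : Type*} [NormedAddCommGroup X] [InnerProductSpace ℝ X]
variable (innE : ExteriorAlgebra ℝ X →ₗ[ℝ] ExteriorAlgebra ℝ X →ₗ[ℝ] ℝ)
variable (hinn : InnerOK innE) {n : ℕ} (b : OrthonormalBasis (Fin n) ℝ X)

lemma sum_repr (M : ExteriorAlgebra ℝ X) :
    M = ∑ s : Finset (Fin n), (basisWedge innE hinn b).repr M s • wedgeOf ⇑b s := by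
  conv_lhs => rw [← Module.Basis.sum_repr (basisWedge innE hinn b) M]
  simp [basisWedge_apply]

lemma gradeProj_eq_sum_filter (M : ExteriorAlgebra ℝ X) (p : ℕ) :
    gradeProj p M = ∑ s ∈ Finset.univ.filter (fun s : Finset (Fin n) => s.card = p),
      (basisWedge innE hinn b).repr M s • wedgeOf ⇑b s := by
  conv_lhs => rw [sum_repr innE hinn b M]
  rw [map_sum, Finset.sum_filter]
  congr 1
  ext s
  rw [map_smul, gradeProj_wedgeOf]
  split_ifs with h <;> simp

lemma innE_wedgeOf_eq_repr (M : ExteriorAlgebra ℝ X) (t : Finset (Fin n)) :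
    innE M (wedgeOf ⇑b t) = (basisWedge innE hinn b).repr M t := by
  have h := congrArg (fun z => innE z (wedgeOf (⇑b) t)) (sum_repr innE hinn b M).symm
  simpa only [map_sum, map_smul, LinearMap.sum_apply, LinearMap.smul_apply, smul_eq_mul,
    hinn n b, mul_ite, mul_one, mul_zero,
    Finset.sum_ite_eq' Finset.univ t, if_pos (Finset.mem_univ t)] using h.symm

lemma repr_gradeProj (M : ExteriorAlgebra ℝ X) (p : ℕ) (s : Finset (Fin n)) :
    (basisWedge innE hinn b).repr (gradeProj p M) s =
      if s.card = p then (basisWedge innE hinn b).repr M s else 0 := by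
  classical
  set B := basisWedge innE hinn b with hB
  rw [gradeProj_eq_sum_filter innE hinn b M p]
  have : ∀ t : Finset (Fin n),
      B.repr (B.repr M t • wedgeOf ⇑b t) s = B.repr M t * (if t = s then 1 else 0) := by
    intro t
    rw [← basisWedge_apply innE hinn b t, map_smul, Module.Basis.repr_self]
    simp [Finsupp.single_apply]
  rw [map_sum]
  simp only [← hB, Finsupp.coe_finset_sum, Finset.sum_apply, this, mul_ite, mul_one, mul_zero]
  rw [Finset.sum_ite_eq' (Finset.univ.filter (fun s : Finset (Fin n) => s.card = p)) s]
  simp only [Finset.mem_filter, Finset.mem_univ, true_and]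

/-- If `v ∧ M = 0` for a basis vector `v = b j`, coefficients of monomials
avoiding `j` vanish. -/
lemma repr_eq_zero_of_wedge_zero {M : ExteriorAlgebra ℝ X} {j : Fin n}
    (hj : ι ℝ (b j) * M = 0) {s : Finset (Fin n)} (hjs : j ∉ s) :
    (basisWedge innE hinn b).repr M s = 0 := by
  classical
  set B := basisWedge innE hinn b with hB
  have h1 : ι ℝ (b j) * M = ∑ t : Finset (Fin n), B.repr M t • (ι ℝ (b j) * wedgeOf ⇑b t) := by
    conv_lhs => rw [sum_repr innE hinn b M]
    rw [Finset.mul_sum]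
    simp [mul_smul_comm, ← hB]
  have h2 : (0 : ℝ) = ∑ t : Finset (Fin n),
      B.repr M t * innE (ι ℝ (b j) * wedgeOf ⇑b t) (wedgeOf ⇑b (insert j s)) := by
    have h3 := congrArg (fun z => innE z (wedgeOf (⇑b) (insert j s))) h1
    rw [hj] at h3
    simpa only [map_sum, map_smul, LinearMap.sum_apply, LinearMap.smul_apply, smul_eq_mul,
      map_zero, LinearMap.zero_apply] using h3
  rw [Finset.sum_eq_single_of_mem s (Finset.mem_univ s) ?_] at h2
  · obtain ⟨ε, hε, hmul⟩ := ι_mul_wedgeOf_of_not_mem (⇑b) hjs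
    rw [hmul, map_smul, LinearMap.smul_apply, hinn n b, if_pos rfl, smul_eq_mul, mul_one] at h2
    rcases hε with h | h <;> subst h <;> linarith
  · intro t _ hts
    by_cases hjt : j ∈ t
    · rw [ι_mul_wedgeOf_of_mem (⇑b) hjt, map_zero, LinearMap.zero_apply, mul_zero]
    · obtain ⟨ε, hε, hmul⟩ := ι_mul_wedgeOf_of_not_mem (⇑b) hjt
      rw [hmul, map_smul, LinearMap.smul_apply, hinn n b, if_neg, smul_eq_mul, mul_zero, mul_zero]
      intro hins
      apply hts
      have := congrArg (fun u => Finset.erase u j) hins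
      simpa [Finset.erase_insert hjt, Finset.erase_insert hjs] using this

/-- If `v ⌟ M = 0` for a basis vector `v = b j`, coefficients of monomials
containing `j` vanish. -/
lemma repr_eq_zero_of_contr_zero
    {lcontr : ExteriorAlgebra ℝ X →ₗ[ℝ] ExteriorAlgebra ℝ X →ₗ[ℝ] ExteriorAlgebra ℝ X}
    (hco : ContrOK innE lcontr) {M : ExteriorAlgebra ℝ X} {j : Fin n}
    (hj : lcontr (ι ℝ (b j)) M = 0) {s : Finset (Fin n)} (hjs : j ∈ s) :
    (basisWedge innE hinn b).repr M s = 0 := by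
  have h1 : innE (lcontr (ι ℝ (b j)) M) (wedgeOf ⇑b (s.erase j)) = 0 := by
    rw [hj]; simp
  rw [hco] at h1
  obtain ⟨ε, hε, hmul⟩ := ι_mul_wedgeOf_of_not_mem (⇑b) (Finset.notMem_erase j s)
  rw [hmul, Finset.insert_erase hjs, map_smul, smul_eq_mul,
    innE_wedgeOf_eq_repr innE hinn b M s] at h1
  rcases hε with h | h <;> subst h <;> linarith

/-- Coefficients of a homogeneous element vanish off its degree. -/
lemma repr_eq_zero_of_card_ne {w : ExteriorAlgebra ℝ X} {p : ℕ} (hw : w ∈ ⋀[ℝ]^p X)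
    {s : Finset (Fin n)} (hs : s.card ≠ p) :
    (basisWedge innE hinn b).repr w s = 0 := by
  have := repr_gradeProj innE hinn b w p s
  rw [gradeProj_of_mem hw] at this
  rwa [if_neg hs] at this

lemma gradeProj_collapse {M : ExteriorAlgebra ℝ X} {p : ℕ} {τ : Finset (Fin n)}
    (hτ : τ.card = p)
    (h : ∀ s : Finset (Fin n), s.card = p → s ≠ τ → (basisWedge innE hinn b).repr M s = 0) :
    gradeProj p M = (basisWedge innE hinn b).repr M τ • wedgeOf ⇑b τ := by
  rw [gradeProj_eq_sum_filter innE hinn b M p]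
  refine Finset.sum_eq_single_of_mem τ (by simp [hτ]) ?_
  intro t ht hnt
  rw [h t (Finset.mem_filter.mp ht).2 hnt, zero_smul]

end ReprPart

end ECS
namespace ECS

section BladePart
variable {X : Type*} [AddCommGroup X] [Module ℝ X]

lemma isBlade_listProd (l : List X) : IsBlade ((l.map (ι ℝ)).prod) := by
  refine ⟨1, l.length, l.get, ?_⟩
  rw [one_smul]
  congr 1
  have : (fun i => ι ℝ (l.get i)) = (ι ℝ) ∘ l.get := rfl
  rw [this, ← List.map_ofFn, List.ofFn_get]

lemma isBlade_smul (c : ℝ) {m : ExteriorAlgebra ℝ X} (h : IsBlade m) : IsBlade (c • m) := by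
  obtain ⟨c', p, f, rfl⟩ := h
  exact ⟨c * c', p, f, by rw [smul_smul]⟩

lemma wedgeOf_eq_map_prod {n : ℕ} (v : Fin n → X) (s : Finset (Fin n)) :
    wedgeOf v s = (((s.sort (· ≤ ·)).map v).map (ι ℝ)).prod := by
  rw [wedgeOf, List.map_map]
  rfl

lemma isBlade_wedgeOf {n : ℕ} (v : Fin n → X) (s : Finset (Fin n)) :
    IsBlade (wedgeOf v s) := by
  rw [wedgeOf_eq_map_prod]
  exact isBlade_listProd _

lemma isBlade_wedgeOf_mul_ι {n : ℕ} (v : Fin n → X) (s : Finset (Fin n)) (x : X) :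
    IsBlade (wedgeOf v s * ι ℝ x) := by
  have : wedgeOf v s * ι ℝ x = ((((s.sort (· ≤ ·)).map v) ++ [x]).map (ι ℝ)).prod := by
    rw [List.map_append, List.prod_append, ← wedgeOf_eq_map_prod]
    simp
  rw [this]
  exact isBlade_listProd _

end BladePart

section AdaptedPart
variable {X : Type*} [NormedAddCommGroup X] [InnerProductSpace ℝ X] [FiniteDimensional ℝ X]

lemma coe_orthonormal {Y : Submodule ℝ X} {m : Type*} (u : m → Y) (hu : Orthonormal ℝ u) :
    Orthonormal ℝ (fun p => (u p : X)) := by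
  classical
  rw [orthonormal_iff_ite] at hu ⊢
  intro p q
  rw [← Submodule.coe_inner]
  exact hu p q

lemma exists_orthonormal_in (Y : Submodule ℝ X) {m : ℕ} (hm : m ≤ Module.finrank ℝ Y) :
    ∃ y : Fin m → X, Orthonormal ℝ y ∧ ∀ p, y p ∈ Y := by
  set u := stdOrthonormalBasis ℝ Y
  refine ⟨fun p => (u (Fin.castLE hm p) : X), ?_, fun p => (u _).2⟩
  exact (coe_orthonormal _ u.orthonormal).comp _ (Fin.castLE_injective hm)

lemma exists_adapted_basis {n m : ℕ} (hn : Module.finrank ℝ X = n)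
    (φ : Fin m → Fin n) (hφ : Function.Injective φ)
    (y : Fin m → X) (hy : Orthonormal ℝ y) :
    ∃ b : OrthonormalBasis (Fin n) ℝ X, ∀ p, b (φ p) = y p := by
  classical
  set v : Fin n → X := Function.extend φ y 0 with hv
  have hvφ : ∀ p, v (φ p) = y p := fun p => hφ.extend_apply y 0 p
  have hrestrict : Orthonormal ℝ ((Set.range φ).restrict v) := by
    set e : Set.range φ ≃ Fin m := (Equiv.ofInjective φ hφ).symm with he
    have hcomp : (Set.range φ).restrict v = y ∘ ⇑e := by
      funext j
      have hj : φ (e j) = (j : Fin n) := Equiv.apply_ofInjective_symm hφ j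
      show v (j : Fin n) = y (e j)
      rw [← hj, hvφ]
    rw [hcomp]
    exact hy.comp _ e.injective
  obtain ⟨b, hb⟩ := hrestrict.exists_orthonormalBasis_extension_of_card_eq
    (by rw [hn, Fintype.card_fin])
  exact ⟨b, fun p => by rw [hb _ ⟨p, rfl⟩, hvφ]⟩

end AdaptedPart

end ECS
namespace ECS

section MainPart
variable {X : Type*} [NormedAddCommGroup X] [InnerProductSpace ℝ X] [FiniteDimensional ℝ X]
variable (innE : ExteriorAlgebra ℝ X →ₗ[ℝ] ExteriorAlgebra ℝ X →ₗ[ℝ] ℝ)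

lemma mem_isp {M : ExteriorAlgebra ℝ X} {x : X} : x ∈ isp M ↔ ι ℝ x * M = 0 := Iff.rfl

lemma mem_ospKer {lcontr : ExteriorAlgebra ℝ X →ₗ[ℝ] ExteriorAlgebra ℝ X →ₗ[ℝ] ExteriorAlgebra ℝ X}
    {M : ExteriorAlgebra ℝ X} {x : X} : x ∈ ospKer lcontr M ↔ lcontr (ι ℝ x) M = 0 := Iff.rfl

lemma partA (hinn : InnerOK innE) (M : ExteriorAlgebra ℝ X) :
    IsBlade (gradeProj (Module.finrank ℝ (isp M)) M) ∧
    IsBlade (gradeProj (Module.finrank ℝ (isp M) + 1) M) := by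
  classical
  set n := Module.finrank ℝ X with hn
  set i := Module.finrank ℝ (isp M) with hi
  have hin : i ≤ n := Submodule.finrank_le _
  obtain ⟨y, hy, hyY⟩ := exists_orthonormal_in (isp M) (le_refl i)
  obtain ⟨b, hb⟩ := exists_adapted_basis hn.symm (Fin.castLE hin)
    (Fin.castLE_injective hin) y hy
  set B := basisWedge innE hinn b with hB
  set σ₀ : Finset (Fin n) :=
    Finset.map ⟨Fin.castLE hin, Fin.castLE_injective hin⟩ Finset.univ with hσ₀
  have hmem : ∀ j : Fin n, j ∈ σ₀ ↔ (j : ℕ) < i := by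
    intro j
    simp only [hσ₀, Finset.mem_map, Finset.mem_univ, true_and,
      Function.Embedding.coeFn_mk]
    constructor
    · rintro ⟨p, rfl⟩; exact p.2
    · intro h; exact ⟨⟨(j : ℕ), h⟩, Fin.ext rfl⟩
  have hcard : σ₀.card = i := by simp [hσ₀]
  have hbisp : ∀ j : Fin n, (j : ℕ) < i → ι ℝ (b j) * M = 0 := by
    intro j hj
    have hje : Fin.castLE hin ⟨(j : ℕ), hj⟩ = j := Fin.ext rfl
    have := hb ⟨(j : ℕ), hj⟩
    rw [hje] at this
    rw [this]
    exact mem_isp.mp (hyY _)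
  have hsupp : ∀ s : Finset (Fin n), ¬ σ₀ ⊆ s → B.repr M s = 0 := by
    intro s hns
    obtain ⟨j, hjσ, hjs⟩ := Finset.not_subset.mp hns
    exact repr_eq_zero_of_wedge_zero innE hinn b (hbisp j ((hmem j).mp hjσ)) hjs
  constructor
  · have h1 : gradeProj i M = B.repr M σ₀ • wedgeOf ⇑b σ₀ := by
      refine gradeProj_collapse innE hinn b hcard ?_
      intro s hs hne
      refine hsupp s ?_
      intro hsub
      exact hne (Finset.eq_of_subset_of_card_le hsub (by rw [hs, hcard])).symm
    rw [h1]
    exact isBlade_smul _ (isBlade_wedgeOf _ _)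
  · set x : X := ∑ k ∈ σ₀ᶜ, B.repr M (insert k σ₀) • b k with hx
    have h2 : gradeProj (i + 1) M = wedgeOf ⇑b σ₀ * ι ℝ x := by
      have hterm : ∀ k ∈ σ₀ᶜ, wedgeOf ⇑b σ₀ * ι ℝ (B.repr M (insert k σ₀) • b k)
          = B.repr M (insert k σ₀) • wedgeOf ⇑b (insert k σ₀) := by
        intro k hk
        have hlt : ∀ j ∈ σ₀, j < k := by
          intro j hj
          have hj' : (j : ℕ) < i := (hmem j).mp hj
          have hk' : ¬ (k : ℕ) < i := fun h => (Finset.mem_compl.mp hk) ((hmem k).mpr h)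
          exact Fin.lt_def.mpr (lt_of_lt_of_le hj' (le_of_not_gt hk'))
        rw [map_smul, mul_smul_comm, ← wedgeOf_insert_top ⇑b hlt]
      have hrhs : wedgeOf ⇑b σ₀ * ι ℝ x
          = ∑ k ∈ σ₀ᶜ, B.repr M (insert k σ₀) • wedgeOf ⇑b (insert k σ₀) := by
        rw [hx, map_sum, Finset.mul_sum]
        exact Finset.sum_congr rfl hterm
      rw [hrhs, gradeProj_eq_sum_filter innE hinn b M (i + 1)]
      have hsub : (σ₀ᶜ).image (fun k => insert k σ₀)
          ⊆ Finset.univ.filter (fun s : Finset (Fin n) => s.card = i + 1) := by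
        intro s hs
        obtain ⟨k, hk, rfl⟩ := Finset.mem_image.mp hs
        rw [Finset.mem_filter]
        exact ⟨Finset.mem_univ _,
          by rw [Finset.card_insert_of_notMem (Finset.mem_compl.mp hk), hcard]⟩
      have hzero : ∀ s ∈ Finset.univ.filter (fun s : Finset (Fin n) => s.card = i + 1),
          s ∉ (σ₀ᶜ).image (fun k => insert k σ₀) → B.repr M s • wedgeOf ⇑b s = 0 := by
        intro s hs hns
        by_cases hc : B.repr M s = 0
        · rw [hc, zero_smul]
        · exfalso
          apply hns
          have hσs : σ₀ ⊆ s := by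
            by_contra hn'
            exact hc (hsupp s hn')
          have hc1 : (s \ σ₀).card = 1 := by
            rw [Finset.card_sdiff_of_subset hσs, (Finset.mem_filter.mp hs).2, hcard]
            omega
          obtain ⟨k, hk⟩ := Finset.card_eq_one.mp hc1
          have hkmem : k ∈ s \ σ₀ := hk ▸ Finset.mem_singleton_self k
          have hknot : k ∉ σ₀ := (Finset.mem_sdiff.mp hkmem).2
          refine Finset.mem_image.mpr ⟨k, Finset.mem_compl.mpr hknot, ?_⟩
          rw [Finset.insert_eq, Finset.union_comm, ← hk,
            Finset.union_sdiff_of_subset hσs]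
      have hinj : ∀ k ∈ σ₀ᶜ, ∀ k' ∈ σ₀ᶜ, insert k σ₀ = insert k' σ₀ → k = k' := by
        intro k hk k' _ h
        have : k ∈ insert k' σ₀ := h ▸ Finset.mem_insert_self k σ₀
        rcases Finset.mem_insert.mp this with h' | h'
        · exact h'
        · exact absurd h' (Finset.mem_compl.mp hk)
      rw [← Finset.sum_subset hsub hzero, Finset.sum_image hinj]
    rw [h2]
    exact isBlade_wedgeOf_mul_ι _ _ _

end MainPart

end ECS
namespace ECS

section MainPartB
variable {X : Type*} [NormedAddCommGroup X] [InnerProductSpace ℝ X] [FiniteDimensional ℝ X]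
variable (innE : ExteriorAlgebra ℝ X →ₗ[ℝ] ExteriorAlgebra ℝ X →ₗ[ℝ] ℝ)

set_option maxHeartbeats 1000000 in
lemma partB (hinn : InnerOK innE)
    (lcontr : ExteriorAlgebra ℝ X →ₗ[ℝ] ExteriorAlgebra ℝ X →ₗ[ℝ] ExteriorAlgebra ℝ X)
    (hco : ContrOK innE lcontr) (M : ExteriorAlgebra ℝ X) :
    (∀ q : ℕ, q + 1 = Module.finrank ℝ (osp lcontr M) → IsBlade (gradeProj q M)) ∧
    IsBlade (gradeProj (Module.finrank ℝ (osp lcontr M)) M) := by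
  classical
  set n := Module.finrank ℝ X with hn
  set o := Module.finrank ℝ (osp lcontr M) with ho
  set m := Module.finrank ℝ (ospKer lcontr M) with hm
  have hmo : m + o = n := Submodule.finrank_add_finrank_orthogonal (ospKer lcontr M)
  have ho_n : o ≤ n := by omega
  set φ : Fin m → Fin n := fun p => ⟨o + (p : ℕ), by omega⟩ with hφ
  have hφinj : Function.Injective φ := by
    intro p p' h
    have := congrArg Fin.val h
    simp only [hφ] at this
    exact Fin.ext (by omega)
  obtain ⟨y, hy, hyY⟩ := exists_orthonormal_in (ospKer lcontr M) (le_refl m)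
  obtain ⟨b, hb⟩ := exists_adapted_basis hn.symm φ hφinj y hy
  set B := basisWedge innE hinn b with hB
  set σ₀ : Finset (Fin n) :=
    Finset.map ⟨Fin.castLE ho_n, Fin.castLE_injective ho_n⟩ Finset.univ with hσ₀
  have hmem : ∀ j : Fin n, j ∈ σ₀ ↔ (j : ℕ) < o := by
    intro j
    simp only [hσ₀, Finset.mem_map, Finset.mem_univ, true_and,
      Function.Embedding.coeFn_mk]
    constructor
    · rintro ⟨p, rfl⟩; exact p.2
    · intro h; exact ⟨⟨(j : ℕ), h⟩, Fin.ext rfl⟩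
  have hcard : σ₀.card = o := by simp [hσ₀]
  have hbker : ∀ j : Fin n, o ≤ (j : ℕ) → lcontr (ι ℝ (b j)) M = 0 := by
    intro j hj
    have hje : φ ⟨(j : ℕ) - o, by omega⟩ = j := Fin.ext (by simp [hφ]; omega)
    rw [← hje, hb]
    exact mem_ospKer.mp (hyY _)
  have hsupp : ∀ s : Finset (Fin n), ¬ s ⊆ σ₀ → B.repr M s = 0 := by
    intro s hns
    obtain ⟨j, hjs, hjσ⟩ := Finset.not_subset.mp hns
    have hj : o ≤ (j : ℕ) := le_of_not_gt (fun h => hjσ ((hmem j).mpr h))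
    exact repr_eq_zero_of_contr_zero innE hinn b hco (hbker j hj) hjs
  constructor
  · -- grade q = o - 1
    intro q hq
    set w := gradeProj q M with hw
    have hwmem : w ∈ ⋀[ℝ]^q X := gradeProj_mem q M
    have hT : ∀ k : Fin n, (k : ℕ) < o →
        ι ℝ (b k) * w ∈ (ℝ ∙ (wedgeOf ⇑b σ₀) : Submodule ℝ _) := by
      intro k hk
      rw [hw, gradeProj_eq_sum_filter innE hinn b M q, Finset.mul_sum]
      refine Submodule.sum_mem _ ?_
      intro s hs
      rw [mul_smul_comm]
      by_cases hc : B.repr M s = 0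
      · rw [hc, zero_smul]; exact Submodule.zero_mem _
      have hsσ : s ⊆ σ₀ := by
        by_contra h
        exact hc (hsupp s h)
      by_cases hks : k ∈ s
      · rw [ι_mul_wedgeOf_of_mem _ hks, smul_zero]; exact Submodule.zero_mem _
      · obtain ⟨ε, _, hmul⟩ := ι_mul_wedgeOf_of_not_mem (⇑b) hks
        have hins : insert k s = σ₀ := by
          refine Finset.eq_of_subset_of_card_le
            (Finset.insert_subset ((hmem k).mpr hk) hsσ) ?_
          rw [Finset.card_insert_of_notMem hks, (Finset.mem_filter.mp hs).2, hcard, hq]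
        rw [hmul, hins]
        exact Submodule.smul_mem _ _ (Submodule.smul_mem _ _
          (Submodule.mem_span_singleton_self _))
    set T : X →ₗ[ℝ] ExteriorAlgebra ℝ X := (LinearMap.mulRight ℝ w).comp (ι ℝ) with hTdef
    set V : Submodule ℝ X := Submodule.span ℝ (⇑b '' ↑σ₀) with hV
    have hVmem : ∀ x ∈ V, T x ∈ (ℝ ∙ (wedgeOf ⇑b σ₀) : Submodule ℝ _) := by
      have hle : V ≤ Submodule.comap T (ℝ ∙ (wedgeOf ⇑b σ₀)) := by
        rw [hV]
        refine Submodule.span_le.mpr ?_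
        rintro _ ⟨k, hk, rfl⟩
        have := hT k ((hmem k).mp (Finset.mem_coe.mp hk))
        simpa [hTdef, LinearMap.mulRight_apply] using this
      exact fun x hx => hle hx
    haveI : FiniteDimensional ℝ (ExteriorAlgebra ℝ X) :=
      Module.Finite.of_basis B
    set T' : V →ₗ[ℝ] ExteriorAlgebra ℝ X := T.comp V.subtype with hT'
    have hrange : LinearMap.range T' ≤ (ℝ ∙ (wedgeOf ⇑b σ₀) : Submodule ℝ _) := by
      rintro _ ⟨x, rfl⟩
      exact hVmem _ x.2
    have hr1 : Module.finrank ℝ (LinearMap.range T') ≤ 1 := by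
      have hspan1 : Module.finrank ℝ (ℝ ∙ (wedgeOf ⇑b σ₀) : Submodule ℝ _) ≤ 1 := by
        by_cases h0 : wedgeOf ⇑b σ₀ = 0
        · rw [h0, Submodule.span_zero_singleton]
          simp
        · rw [finrank_span_singleton h0]
      exact le_trans (Submodule.finrank_mono hrange) hspan1
    have hli : LinearIndependent ℝ (fun p : Fin o => b (Fin.castLE ho_n p)) :=
      (b.orthonormal.comp _ (Fin.castLE_injective ho_n)).linearIndependent
    have himg : ⇑b '' ↑σ₀ = Set.range (fun p : Fin o => b (Fin.castLE ho_n p)) := by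
      rw [hσ₀, Finset.coe_map, Finset.coe_univ, Set.image_univ, ← Set.range_comp]
      rfl
    have hfrV : Module.finrank ℝ V = o := by
      rw [hV, himg, finrank_span_eq_card hli, Fintype.card_fin]
    have hkerT : q ≤ Module.finrank ℝ (LinearMap.ker T') := by
      have hrn := LinearMap.finrank_range_add_finrank_ker T'
      rw [hfrV] at hrn
      omega
    set K : Submodule ℝ X := (LinearMap.ker T').map V.subtype with hK
    have hKrank : q ≤ Module.finrank ℝ K := by
      rw [hK, Submodule.finrank_map_subtype_eq]
      exact hkerT
    have hKw : ∀ z ∈ K, ι ℝ z * w = 0 := by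
      intro z hz
      obtain ⟨u, hu, rfl⟩ := Submodule.mem_map.mp hz
      have h0 : T' u = 0 := LinearMap.mem_ker.mp hu
      simpa [hT', hTdef, LinearMap.mulRight_apply] using h0
    obtain ⟨y', hy', hy'K⟩ := exists_orthonormal_in K hKrank
    have hq_n : q ≤ n := by omega
    obtain ⟨b', hb'⟩ := exists_adapted_basis hn.symm (Fin.castLE hq_n)
      (Fin.castLE_injective hq_n) y' hy'
    set τ : Finset (Fin n) :=
      Finset.map ⟨Fin.castLE hq_n, Fin.castLE_injective hq_n⟩ Finset.univ with hτ
    have hmemτ : ∀ j : Fin n, j ∈ τ ↔ (j : ℕ) < q := by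
      intro j
      simp only [hτ, Finset.mem_map, Finset.mem_univ, true_and,
        Function.Embedding.coeFn_mk]
      constructor
      · rintro ⟨p, rfl⟩; exact p.2
      · intro h; exact ⟨⟨(j : ℕ), h⟩, Fin.ext rfl⟩
    have hcτ : τ.card = q := by simp [hτ]
    have hb'w : ∀ j : Fin n, (j : ℕ) < q → ι ℝ (b' j) * w = 0 := by
      intro j hj
      have hje : Fin.castLE hq_n ⟨(j : ℕ), hj⟩ = j := Fin.ext rfl
      have := hb' ⟨(j : ℕ), hj⟩
      rw [hje] at this
      rw [this]
      exact hKw _ (hy'K _)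
    have hcol : gradeProj q w = (basisWedge innE hinn b').repr w τ • wedgeOf ⇑b' τ := by
      refine gradeProj_collapse innE hinn b' hcτ ?_
      intro s hs hne
      have hns : ¬ τ ⊆ s := fun hsub =>
        hne (Finset.eq_of_subset_of_card_le hsub (by rw [hs, hcτ])).symm
      obtain ⟨j, hjτ, hjs⟩ := Finset.not_subset.mp hns
      exact repr_eq_zero_of_wedge_zero innE hinn b' (hb'w j ((hmemτ j).mp hjτ)) hjs
    rw [gradeProj_of_mem hwmem] at hcol
    rw [hcol]
    exact isBlade_smul _ (isBlade_wedgeOf _ _)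
  · -- grade o
    have h1 : gradeProj o M = B.repr M σ₀ • wedgeOf ⇑b σ₀ := by
      refine gradeProj_collapse innE hinn b hcard ?_
      intro s hs hne
      refine hsupp s ?_
      intro hsub
      exact hne (Finset.eq_of_subset_of_card_le hsub (by rw [hs, hcard]))
    rw [h1]
    exact isBlade_smul _ (isBlade_wedgeOf _ _)

end MainPartB

end ECS
/-- The homogeneous components of `M` of grades
`i = dim isp M`, `i + 1`, `o − 1` and `o = dim osp M` are simple. -/
theorem extreme_components_simple {X : Type*} [NormedAddCommGroup X]
    [InnerProductSpace ℝ X] [FiniteDimensional ℝ X]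
    (innE : ExteriorAlgebra ℝ X →ₗ[ℝ] ExteriorAlgebra ℝ X →ₗ[ℝ] ℝ)
    (lcontr : ExteriorAlgebra ℝ X →ₗ[ℝ] ExteriorAlgebra ℝ X →ₗ[ℝ] ExteriorAlgebra ℝ X)
    (hinn : InnerOK innE) (hc : ContrOK innE lcontr)
    (M : ExteriorAlgebra ℝ X) (hM0 : M ≠ 0) :
    IsBlade (gradeProj (Module.finrank ℝ (isp M)) M) ∧
    IsBlade (gradeProj (Module.finrank ℝ (isp M) + 1) M) ∧
    (∀ q : ℕ, q + 1 = Module.finrank ℝ (osp lcontr M) → IsBlade (gradeProj q M)) ∧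
    IsBlade (gradeProj (Module.finrank ℝ (osp lcontr M)) M) := by
  obtain ⟨hA1, hA2⟩ := ECS.partA innE hinn M
  obtain ⟨hB1, hB2⟩ := ECS.partB innE hinn lcontr hc M
  exact ⟨hA1, hA2, hB1, hB2⟩

end
end

section
/- Fix an orthonormal basis (v₁,…,vₙ) of X, and let i, j, k ⊆ {1,…,n}. Partition the indices as a = i∖(j∪k), b = (j∩k)∖i, c = i∩j∩k, d = (i∩j)∖k, e = k∖(i∪j), x = j∖(i∪k), y = (i∩k)∖j. Then ⦃a_i†, a_j⦄ v_k = δ_{x∪y=∅} · (δ_{d=∅} − δ_{c=∅}) · (−1)^{|d| + N(a∪b, d∪e)} · v_{a∪c∪e}, where δ_P = 1 if condition P holds and 0 otherwise; in particular, ⦃a_i†, a_j⦄ v_k = 0 unless x = y = ∅ and exactly one of c, d is empty. -/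
/-!
Setup: `X` is a finite-dimensional real inner product space, `⋀X` its exterior
algebra.  We hypothesize a bilinear form `innE` on the exterior algebra which makes
the wedges of any orthonormal basis of `X` (over increasing index sets) orthonormal
— this characterizes the inner product of the paper — and a bilinear left
contraction `lcontr` adjoint to the wedge product: `⟨M⌟N, L⟩ = ⟨N, M∧L⟩`.
-/

noncomputable section

open ExteriorAlgebra

/-- `N(r,s)`: the number of pairs `(a, b)` with `a ∈ r`, `b ∈ s` and `a > b`. -/
def npairs {n : ℕ} (r s : Finset (Fin n)) : ℕ :=
  ((r ×ˢ s).filter fun ab => ab.2 < ab.1).card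

set_option maxHeartbeats 1000000

namespace SC
variable {X : Type*} [AddCommGroup X] [Module ℝ X] {n : ℕ} (v : Fin n → X)

lemma wedgeOf_empty : wedgeOf v ∅ = 1 := by simp [wedgeOf]

lemma wedgeOf_singleton (a : Fin n) : wedgeOf v {a} = ι ℝ (v a) := by
  simp [wedgeOf]

lemma wedgeOf_insert {s : Finset (Fin n)} {b : Fin n} (hb : b ∉ s)
    (hmin : ∀ c ∈ s, b ≤ c) :
    wedgeOf v (insert b s) = ι ℝ (v b) * wedgeOf v s := by
  unfold wedgeOf
  rw [Finset.sort_insert _ hmin hb, List.map_cons, List.prod_cons]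

lemma wedgeOf_min {s : Finset (Fin n)} (hs : s.Nonempty) :
    wedgeOf v s = ι ℝ (v (s.min' hs)) * wedgeOf v (s.erase (s.min' hs)) := by
  conv_lhs => rw [← Finset.insert_erase (s.min'_mem hs)]
  exact wedgeOf_insert v (Finset.notMem_erase _ _)
    (fun c hc => s.min'_le c (Finset.mem_of_mem_erase hc))

lemma ι_anticomm (x y : X) : ι ℝ x * ι ℝ y = -(ι ℝ y * ι ℝ x) :=
  eq_neg_of_add_eq_zero_left (ι_add_mul_swap x y)

lemma ι_mul_list (z : X) (l : List (Fin n)) :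
    ι ℝ z * (l.map fun i => ι ℝ (v i)).prod =
      (-1 : ℝ) ^ l.length • ((l.map fun i => ι ℝ (v i)).prod * ι ℝ z) := by
  induction l with
  | nil => simp
  | cons b l ih =>
    simp only [List.map_cons, List.prod_cons, List.length_cons]
    rw [← mul_assoc, ι_anticomm z (v b), neg_mul, mul_assoc, ih, mul_smul_comm,
      ← mul_assoc, pow_succ, mul_comm ((-1:ℝ)^l.length) (-1), mul_smul, neg_smul,
      one_smul]

lemma ι_mul_wedge (z : X) (s : Finset (Fin n)) :
    ι ℝ z * wedgeOf v s = (-1 : ℝ) ^ s.card • (wedgeOf v s * ι ℝ z) := by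
  unfold wedgeOf
  rw [ι_mul_list, Finset.length_sort]

lemma neg_one_sq_pow (m : ℕ) : ((-1 : ℝ) ^ m) * ((-1 : ℝ) ^ m) = 1 := by
  rw [← pow_add]
  exact Even.neg_one_pow ⟨m, rfl⟩

lemma wedge_mul_not_mem : ∀ s : Finset (Fin n), ∀ a ∉ s,
    wedgeOf v s * ι ℝ (v a) =
      (-1 : ℝ) ^ (s.filter fun c => a < c).card • wedgeOf v (insert a s) := by
  intro s
  induction s using Finset.strongInduction with
  | _ s ih =>
    intro a ha
    rcases s.eq_empty_or_nonempty with rfl | hs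
    · simp [wedgeOf_empty, wedgeOf_singleton]
    · set b := s.min' hs with hbdef
      have hbmem : b ∈ s := s.min'_mem hs
      have hab : a ≠ b := fun h => ha (h ▸ hbmem)
      rcases hab.lt_or_gt with hlt | hlt
      · -- a < b, so a < everything in s
        have h1 : ∀ c ∈ s, a < c := fun c hc => lt_of_lt_of_le hlt (s.min'_le c hc)
        rw [Finset.filter_true_of_mem h1,
          wedgeOf_insert v ha (fun c hc => (h1 c hc).le), ι_mul_wedge,
          smul_smul, neg_one_sq_pow, one_smul]
      · -- b < a
        have hae : a ∉ s.erase b := fun h => ha (Finset.mem_of_mem_erase h)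
        have hfe : (s.filter fun c => a < c) = (s.erase b).filter fun c => a < c := by
          ext c
          simp only [Finset.mem_filter, Finset.mem_erase]
          constructor
          · rintro ⟨h1, h2⟩
            exact ⟨⟨fun h => absurd (h ▸ h2) (asymm hlt), h1⟩, h2⟩
          · rintro ⟨⟨_, h1⟩, h2⟩
            exact ⟨h1, h2⟩
        have hins : insert a s = insert b (insert a (s.erase b)) := by
          rw [Finset.insert_comm, Finset.insert_erase hbmem]
        have hbni : b ∉ insert a (s.erase b) := by
          simp only [Finset.mem_insert, Finset.notMem_erase, or_false]
          exact fun h => hab (h.symm) |>.elim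
        have hble : ∀ c ∈ insert a (s.erase b), b ≤ c := by
          intro c hc
          rcases Finset.mem_insert.mp hc with rfl | hc
          · exact hlt.le
          · exact s.min'_le c (Finset.mem_of_mem_erase hc)
        rw [wedgeOf_min v hs, mul_assoc, ← hbdef,
          ih (s.erase b) (Finset.erase_ssubset hbmem) a hae, mul_smul_comm,
          ← wedgeOf_insert v hbni hble, ← hins, hfe]

lemma wedge_mul_mem : ∀ s : Finset (Fin n), ∀ a ∈ s,
    wedgeOf v s * ι ℝ (v a) = 0 := by
  intro s
  induction s using Finset.strongInduction with
  | _ s ih =>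
    intro a ha
    have hs : s.Nonempty := ⟨a, ha⟩
    by_cases hab : a = s.min' hs
    · rw [wedgeOf_min v hs, ← hab, mul_assoc,
        wedge_mul_not_mem v (s.erase a) a (Finset.notMem_erase _ _),
        Finset.insert_erase ha, mul_smul_comm, wedgeOf_min v hs, ← hab,
        ← mul_assoc, ι_sq_zero, zero_mul, smul_zero]
    · have hbmem := s.min'_mem hs
      have hae : a ∈ s.erase (s.min' hs) := Finset.mem_erase.mpr ⟨hab, ha⟩
      rw [wedgeOf_min v hs, mul_assoc, ih _ (Finset.erase_ssubset hbmem) a hae,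
        mul_zero]

lemma npairs_empty_right (s : Finset (Fin n)) : npairs s ∅ = 0 := by
  simp [npairs]

lemma npairs_empty_left (s : Finset (Fin n)) : npairs ∅ s = 0 := by
  simp [npairs]

lemma npairs_union_right (s t₁ t₂ : Finset (Fin n)) (h : Disjoint t₁ t₂) :
    npairs s (t₁ ∪ t₂) = npairs s t₁ + npairs s t₂ := by
  unfold npairs
  have hdis : Disjoint ((s ×ˢ t₁).filter fun ab => ab.2 < ab.1)
      ((s ×ˢ t₂).filter fun ab => ab.2 < ab.1) := by
    refine Finset.disjoint_left.mpr ?_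
    rintro ⟨p, q⟩ h1 h2
    simp only [Finset.mem_filter, Finset.mem_product] at h1 h2
    exact (Finset.disjoint_left.mp h) h1.1.2 h2.1.2
  rw [Finset.product_union, Finset.filter_union, Finset.card_union_of_disjoint hdis]

lemma npairs_union_left (s₁ s₂ t : Finset (Fin n)) (h : Disjoint s₁ s₂) :
    npairs (s₁ ∪ s₂) t = npairs s₁ t + npairs s₂ t := by
  unfold npairs
  have hdis : Disjoint ((s₁ ×ˢ t).filter fun ab => ab.2 < ab.1)
      ((s₂ ×ˢ t).filter fun ab => ab.2 < ab.1) := by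
    refine Finset.disjoint_left.mpr ?_
    rintro ⟨p, q⟩ h1 h2
    simp only [Finset.mem_filter, Finset.mem_product] at h1 h2
    exact (Finset.disjoint_left.mp h) h1.1.1 h2.1.1
  rw [Finset.union_product, Finset.filter_union, Finset.card_union_of_disjoint hdis]

lemma npairs_singleton_right (s : Finset (Fin n)) (b : Fin n) :
    npairs s {b} = (s.filter fun c => b < c).card := by
  unfold npairs
  rw [show ((s ×ˢ {b}).filter fun ab => ab.2 < ab.1) =
      (s.filter fun c => b < c).image (fun a => (a, b)) by
    ext ⟨p, q⟩
    simp only [Finset.mem_filter, Finset.mem_product, Finset.mem_singleton,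
      Finset.mem_image, Prod.mk.injEq]
    constructor
    · rintro ⟨⟨hp, rfl⟩, hlt⟩
      exact ⟨p, ⟨hp, hlt⟩, rfl, rfl⟩
    · rintro ⟨a, ⟨ha, hlt⟩, rfl, rfl⟩
      exact ⟨⟨ha, rfl⟩, hlt⟩]
  exact Finset.card_image_of_injective _ (fun p q h => (Prod.mk.injEq _ _ _ _ ▸ h).1)

lemma npairs_singleton_left (t : Finset (Fin n)) (b : Fin n) :
    npairs {b} t = (t.filter fun c => c < b).card := by
  unfold npairs
  rw [show (({b} ×ˢ t).filter fun ab => ab.2 < ab.1) =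
      (t.filter fun c => c < b).image (fun a => (b, a)) by
    ext ⟨p, q⟩
    simp only [Finset.mem_filter, Finset.mem_product, Finset.mem_singleton,
      Finset.mem_image, Prod.mk.injEq]
    constructor
    · rintro ⟨⟨rfl, hq⟩, hlt⟩
      exact ⟨q, ⟨hq, hlt⟩, rfl, rfl⟩
    · rintro ⟨a, ⟨ha, hlt⟩, rfl, rfl⟩
      exact ⟨⟨rfl, ha⟩, hlt⟩]
  exact Finset.card_image_of_injective _ (fun p q h => (Prod.mk.injEq _ _ _ _ ▸ h).2)

lemma npairs_add_swap (s t : Finset (Fin n)) (h : Disjoint s t) :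
    npairs s t + npairs t s = s.card * t.card := by
  have hswap : npairs t s = ((s ×ˢ t).filter fun ab => ab.1 < ab.2).card := by
    unfold npairs
    rw [show ((t ×ˢ s).filter fun ab => ab.2 < ab.1) =
        ((s ×ˢ t).filter fun ab => ab.1 < ab.2).image Prod.swap by
      ext ⟨p, q⟩
      simp only [Finset.mem_filter, Finset.mem_product, Finset.mem_image,
        Prod.exists, Prod.swap_prod_mk, Prod.mk.injEq]
      constructor
      · rintro ⟨⟨hp, hq⟩, hlt⟩
        exact ⟨q, p, ⟨⟨hq, hp⟩, hlt⟩, rfl, rfl⟩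
      · rintro ⟨x, y, ⟨⟨hx, hy⟩, hlt⟩, rfl, rfl⟩
        exact ⟨⟨hy, hx⟩, hlt⟩]
    exact Finset.card_image_of_injective _ Prod.swap_injective
  have hcongr : ((s ×ˢ t).filter fun ab => ab.1 < ab.2) =
      ((s ×ˢ t).filter fun ab => ¬ ab.2 < ab.1) := by
    refine Finset.filter_congr ?_
    rintro ⟨p, q⟩ hpq
    simp only [Finset.mem_product] at hpq
    have hne : p ≠ q := fun hh => (Finset.disjoint_left.mp h) hpq.1 (hh ▸ hpq.2)
    constructor
    · exact fun h1 => asymm h1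
    · intro h1
      exact lt_of_le_of_ne (not_lt.mp h1) hne
  rw [hswap, hcongr, npairs, Finset.card_filter_add_card_filter_not,
    Finset.card_product]

lemma wedge_mul_wedge_disjoint : ∀ t s : Finset (Fin n), Disjoint s t →
    wedgeOf v s * wedgeOf v t = (-1 : ℝ) ^ npairs s t • wedgeOf v (s ∪ t) := by
  intro t
  induction t using Finset.strongInduction with
  | _ t ih =>
    intro s hdisj
    rcases t.eq_empty_or_nonempty with rfl | ht
    · simp [wedgeOf_empty, npairs_empty_right]
    · set b := t.min' ht with hbdef
      have hbmem : b ∈ t := t.min'_mem ht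
      have hbs : b ∉ s := Finset.disjoint_right.mp hdisj hbmem
      have hdisj2 : Disjoint (insert b s) (t.erase b) := by
        simp only [Finset.disjoint_left, Finset.mem_insert, Finset.mem_erase]
        rintro p (rfl | hp)
        · rintro ⟨hne, _⟩; exact hne rfl
        · rintro ⟨_, hpt⟩; exact Finset.disjoint_left.mp hdisj hp hpt
      rw [wedgeOf_min v ht, ← hbdef, ← mul_assoc,
        wedge_mul_not_mem v s b hbs, smul_mul_assoc,
        ih (t.erase b) (Finset.erase_ssubset hbmem) (insert b s) hdisj2,
        smul_smul, ← pow_add]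
      have hset : insert b s ∪ t.erase b = s ∪ t := by
        rw [Finset.insert_union, ← Finset.union_insert, Finset.insert_erase hbmem]
      have hexp : (s.filter fun c => b < c).card + npairs (insert b s) (t.erase b)
          = npairs s t := by
        have h1 : npairs (insert b s) (t.erase b)
            = npairs {b} (t.erase b) + npairs s (t.erase b) := by
          rw [Finset.insert_eq, npairs_union_left]
          simpa using hbs
        have h2 : npairs {b} (t.erase b) = 0 := by
          rw [npairs_singleton_left]
          rw [Finset.card_eq_zero, Finset.filter_eq_empty_iff]
          intro c hc
          have := t.min'_le c (Finset.mem_of_mem_erase hc)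
          exact not_lt.mpr (hbdef ▸ this)
        have h3 : npairs s t = npairs s {b} + npairs s (t.erase b) := by
          conv_lhs => rw [← Finset.insert_erase hbmem, Finset.insert_eq]
          rw [npairs_union_right]
          simp
        rw [h1, h2, h3, npairs_singleton_right, zero_add]
      rw [hset, hexp]

lemma wedge_mul_wedge_nondisjoint : ∀ t s : Finset (Fin n), ¬ Disjoint s t →
    wedgeOf v s * wedgeOf v t = 0 := by
  intro t
  induction t using Finset.strongInduction with
  | _ t ih =>
    intro s hdisj
    have ht : t.Nonempty := by
      rcases t.eq_empty_or_nonempty with rfl | ht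
      · exact absurd (Finset.disjoint_empty_right s) hdisj
      · exact ht
    have hbmem : t.min' ht ∈ t := t.min'_mem ht
    rw [wedgeOf_min v ht, ← mul_assoc]
    by_cases hbs : t.min' ht ∈ s
    · rw [wedge_mul_mem v s _ hbs, zero_mul]
    · rw [wedge_mul_not_mem v s _ hbs, smul_mul_assoc,
        ih (t.erase (t.min' ht)) (Finset.erase_ssubset hbmem)]
      · rw [smul_zero]
      · intro hcon
        apply hdisj
        refine Finset.disjoint_left.mpr fun p hps hpt => ?_
        by_cases hpb : p = t.min' ht
        · exact hbs (hpb ▸ hps)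
        · exact Finset.disjoint_left.mp hcon (Finset.mem_insert_of_mem hps)
            (Finset.mem_erase.mpr ⟨hpb, hpt⟩)

lemma wedge_mul_wedge (s t : Finset (Fin n)) :
    wedgeOf v s * wedgeOf v t =
      if Disjoint s t then (-1 : ℝ) ^ npairs s t • wedgeOf v (s ∪ t) else 0 := by
  split
  · exact wedge_mul_wedge_disjoint v t s ‹_›
  · exact wedge_mul_wedge_nondisjoint v t s ‹_›

lemma mem_span_wedge (b : Module.Basis (Fin n) ℝ X) (M : ExteriorAlgebra ℝ X) :
    M ∈ Submodule.span ℝ (Set.range (wedgeOf (⇑b))) := by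
  set S := Submodule.span ℝ (Set.range (wedgeOf (⇑b))) with hS
  have hw : ∀ s, wedgeOf (⇑b) s ∈ S := fun s => Submodule.subset_span ⟨s, rfl⟩
  have hmul : ∀ p ∈ S, ∀ q ∈ S, p * q ∈ S := by
    intro p hp q hq
    induction hp using Submodule.span_induction with
    | mem z hz =>
      obtain ⟨s, rfl⟩ := hz
      induction hq using Submodule.span_induction with
      | mem w hw' =>
        obtain ⟨t, rfl⟩ := hw'
        rw [wedge_mul_wedge]
        split
        · exact Submodule.smul_mem _ _ (hw _)
        · exact Submodule.zero_mem _
      | zero => rw [mul_zero]; exact Submodule.zero_mem _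
      | add u w _ _ hu hw' => rw [mul_add]; exact Submodule.add_mem _ hu hw'
      | smul a u _ hu => rw [mul_smul_comm]; exact Submodule.smul_mem _ _ hu
    | zero => rw [zero_mul]; exact Submodule.zero_mem _
    | add u w _ _ hu hw' => rw [add_mul]; exact Submodule.add_mem _ hu hw'
    | smul a u _ hu => rw [smul_mul_assoc]; exact Submodule.smul_mem _ _ hu
  induction M using ExteriorAlgebra.induction with
  | algebraMap r =>
    rw [Algebra.algebraMap_eq_smul_one]
    exact Submodule.smul_mem _ _ (wedgeOf_empty (⇑b) ▸ hw ∅)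
  | ι x =>
    rw [← Module.Basis.sum_repr b x, map_sum]
    refine Submodule.sum_mem _ fun i _ => ?_
    rw [map_smul]
    exact Submodule.smul_mem _ _ (wedgeOf_singleton (⇑b) i ▸ hw {i})
  | mul p q hp hq => exact hmul p hp q hq
  | add p q hp hq => exact Submodule.add_mem _ hp hq

variable {Y : Type*} [NormedAddCommGroup Y] [InnerProductSpace ℝ Y] {m : ℕ}

lemma eq_zero_of_innE {innE : ExteriorAlgebra ℝ Y →ₗ[ℝ] ExteriorAlgebra ℝ Y →ₗ[ℝ] ℝ}
    (hinn : InnerOK innE) (v : OrthonormalBasis (Fin m) ℝ Y)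
    (M : ExteriorAlgebra ℝ Y) (h : ∀ t, innE M (wedgeOf (⇑v) t) = 0) : M = 0 := by
  have hsp : M ∈ Submodule.span ℝ (Set.range (wedgeOf (⇑v))) := by
    have := mem_span_wedge v.toBasis M
    rwa [v.coe_toBasis] at this
  obtain ⟨c, hc⟩ := (Submodule.mem_span_range_iff_exists_fun ℝ).mp hsp
  have hct : ∀ t, c t = 0 := by
    intro t
    have h1 := h t
    rw [← hc, map_sum, LinearMap.sum_apply] at h1
    simp only [map_smul, LinearMap.smul_apply, smul_eq_mul, hinn m v _ t] at h1
    simp only [mul_ite, mul_one, mul_zero] at h1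
    rwa [Finset.sum_ite_eq' Finset.univ t c, if_pos (Finset.mem_univ t)] at h1
  rw [← hc]
  simp [hct]

lemma lcontr_wedge {innE : ExteriorAlgebra ℝ Y →ₗ[ℝ] ExteriorAlgebra ℝ Y →ₗ[ℝ] ℝ}
    {lcontr : ExteriorAlgebra ℝ Y →ₗ[ℝ] ExteriorAlgebra ℝ Y →ₗ[ℝ] ExteriorAlgebra ℝ Y}
    (hinn : InnerOK innE) (hcon : ContrOK innE lcontr)
    (v : OrthonormalBasis (Fin m) ℝ Y) (j k : Finset (Fin m)) :
    lcontr (wedgeOf (⇑v) j) (wedgeOf (⇑v) k) =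
      if j ⊆ k then ((-1 : ℝ) ^ npairs j (k \ j)) • wedgeOf (⇑v) (k \ j) else 0 := by
  rw [← sub_eq_zero]
  apply eq_zero_of_innE hinn v
  intro t
  rw [map_sub, LinearMap.sub_apply, hcon, sub_eq_zero, wedge_mul_wedge]
  by_cases hjt : Disjoint j t
  · rw [if_pos hjt, map_smul, smul_eq_mul, hinn m v k (j ∪ t)]
    by_cases hjk : j ⊆ k
    · rw [if_pos hjk, map_smul, LinearMap.smul_apply, smul_eq_mul,
        hinn m v (k \ j) t]
      by_cases ht : k = j ∪ t
      · have ht' : t = k \ j := by rw [ht, Finset.union_sdiff_cancel_left hjt]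
        rw [if_pos ht, if_pos ht'.symm, ht']
      · have ht' : k \ j ≠ t := by
          intro hh
          exact ht (by rw [← hh, Finset.union_sdiff_of_subset hjk])
        rw [if_neg ht, if_neg ht', mul_zero, mul_zero]
    · have hne : k ≠ j ∪ t := fun hh => hjk (hh ▸ Finset.subset_union_left)
      rw [if_neg hjk, if_neg hne, mul_zero]
      simp
  · rw [if_neg hjt, map_zero]
    by_cases hjk : j ⊆ k
    · rw [if_pos hjk, map_smul, LinearMap.smul_apply, smul_eq_mul,
        hinn m v (k \ j) t]
      have hne : k \ j ≠ t := by
        intro hh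
        exact hjt (hh ▸ Finset.sdiff_disjoint.symm)
      rw [if_neg hne, mul_zero]
    · rw [if_neg hjk]
      simp

lemma neg_one_pow_congr {p q : ℕ} (h : p % 2 = q % 2) : (-1 : ℝ) ^ p = (-1 : ℝ) ^ q := by
  conv_lhs => rw [← Nat.div_add_mod p 2]
  conv_rhs => rw [← Nat.div_add_mod q 2]
  rw [pow_add, pow_add, pow_mul, pow_mul, neg_one_sq, one_pow, one_pow, h]

lemma key_formula {innE : ExteriorAlgebra ℝ Y →ₗ[ℝ] ExteriorAlgebra ℝ Y →ₗ[ℝ] ℝ}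
    {lcontr : ExteriorAlgebra ℝ Y →ₗ[ℝ] ExteriorAlgebra ℝ Y →ₗ[ℝ] ExteriorAlgebra ℝ Y}
    (hinn : InnerOK innE) (hcon : ContrOK innE lcontr)
    (v : OrthonormalBasis (Fin m) ℝ Y) (i j k : Finset (Fin m)) :
    wedgeOf (⇑v) i * lcontr (wedgeOf (⇑v) j) (wedgeOf (⇑v) k) -
        (-1 : ℝ) ^ (i.card * j.card) •
          lcontr (wedgeOf (⇑v) j) (wedgeOf (⇑v) i * wedgeOf (⇑v) k) =
      ((if (j \ (i ∪ k)) ∪ ((i ∩ k) \ j) = ∅ then (1 : ℝ) else 0) *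
        ((if (i ∩ j) \ k = ∅ then (1 : ℝ) else 0) -
          (if i ∩ j ∩ k = ∅ then (1 : ℝ) else 0)) *
        (-1 : ℝ) ^ (((i ∩ j) \ k).card +
          npairs ((i \ (j ∪ k)) ∪ ((j ∩ k) \ i)) (((i ∩ j) \ k) ∪ (k \ (i ∪ j))))) •
        wedgeOf (⇑v) ((i \ (j ∪ k)) ∪ (i ∩ j ∩ k) ∪ (k \ (i ∪ j))) := by
  rw [lcontr_wedge hinn hcon v j k, wedge_mul_wedge (⇑v) i k]
  by_cases hx : j \ (i ∪ k) = ∅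
  · by_cases hy : (i ∩ k) \ j = ∅
    · -- x = y = ∅
      have hx' : ∀ p, p ∈ j → p ∈ i ∨ p ∈ k := by
        intro p hp
        by_contra hc2
        push_neg at hc2
        exact Finset.notMem_empty p (hx ▸ Finset.mem_sdiff.mpr
          ⟨hp, fun hh => (Finset.mem_union.mp hh).elim hc2.1 hc2.2⟩)
      have hy' : ∀ p, p ∈ i → p ∈ k → p ∈ j := by
        intro p h1 h2
        by_contra hc2
        exact Finset.notMem_empty p (hy ▸ Finset.mem_sdiff.mpr
          ⟨Finset.mem_inter.mpr ⟨h1, h2⟩, hc2⟩)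
      rw [hx, hy, Finset.union_empty, if_pos rfl, one_mul]
      have dab : Disjoint (i \ (j ∪ k)) ((j ∩ k) \ i) := by
        refine Finset.disjoint_left.mpr fun p hp hq => ?_
        simp only [Finset.mem_sdiff, Finset.mem_union, Finset.mem_inter] at hp hq
        tauto
      have dad : Disjoint (i \ (j ∪ k)) ((i ∩ j) \ k) := by
        refine Finset.disjoint_left.mpr fun p hp hq => ?_
        simp only [Finset.mem_sdiff, Finset.mem_union, Finset.mem_inter] at hp hq
        tauto
      have dbd : Disjoint ((j ∩ k) \ i) ((i ∩ j) \ k) := by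
        refine Finset.disjoint_left.mpr fun p hp hq => ?_
        simp only [Finset.mem_sdiff, Finset.mem_union, Finset.mem_inter] at hp hq
        tauto
      have dae : Disjoint (i \ (j ∪ k)) (k \ (i ∪ j)) := by
        refine Finset.disjoint_left.mpr fun p hp hq => ?_
        simp only [Finset.mem_sdiff, Finset.mem_union, Finset.mem_inter] at hp hq
        tauto
      have dbe : Disjoint ((j ∩ k) \ i) (k \ (i ∪ j)) := by
        refine Finset.disjoint_left.mpr fun p hp hq => ?_
        simp only [Finset.mem_sdiff, Finset.mem_union, Finset.mem_inter] at hp hq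
        tauto
      have dde : Disjoint ((i ∩ j) \ k) (k \ (i ∪ j)) := by
        refine Finset.disjoint_left.mpr fun p hp hq => ?_
        simp only [Finset.mem_sdiff, Finset.mem_union, Finset.mem_inter] at hp hq
        tauto
      have dbc : Disjoint ((j ∩ k) \ i) (i ∩ j ∩ k) := by
        refine Finset.disjoint_left.mpr fun p hp hq => ?_
        simp only [Finset.mem_sdiff, Finset.mem_union, Finset.mem_inter] at hp hq
        tauto
      have dac : Disjoint (i \ (j ∪ k)) (i ∩ j ∩ k) := by
        refine Finset.disjoint_left.mpr fun p hp hq => ?_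
        simp only [Finset.mem_sdiff, Finset.mem_union, Finset.mem_inter] at hp hq
        tauto
      by_cases hd : (i ∩ j) \ k = ∅
      · have hd' : ∀ p, p ∈ i → p ∈ j → p ∈ k := by
          intro p h1 h2
          by_contra hc2
          exact Finset.notMem_empty p (hd ▸ Finset.mem_sdiff.mpr
            ⟨Finset.mem_inter.mpr ⟨h1, h2⟩, hc2⟩)
        have hjk : j ⊆ k := fun p hp => (hx' p hp).elim (fun h1 => hd' p h1 hp) id
        have h1 : Disjoint i (k \ j) := Finset.disjoint_left.mpr fun p h2 h3 =>
          (Finset.mem_sdiff.mp h3).2 (hy' p h2 (Finset.mem_sdiff.mp h3).1)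
        have hkj : k \ j = k \ (i ∪ j) := by
          ext p
          simp only [Finset.mem_sdiff, Finset.mem_union, not_or]
          have g1 := hy' p
          tauto
        have hiE : i ∪ k \ (i ∪ j) = i \ (j ∪ k) ∪ i ∩ j ∩ k ∪ k \ (i ∪ j) := by
          ext p
          simp only [Finset.mem_union, Finset.mem_sdiff, Finset.mem_inter, not_or]
          have g1 := hy' p; have g2 := hd' p
          tauto
        rw [if_pos hjk, mul_smul_comm, hkj, wedge_mul_wedge (⇑v) i (k \ (i ∪ j)),
          if_pos (by rw [hkj] at h1; exact h1), hiE, if_pos hd]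
        by_cases hcE : i ∩ j ∩ k = ∅
        · -- c = d = ∅ : the two terms cancel
          have hc' : ∀ p, p ∈ i → p ∈ j → p ∈ k → False := fun p h1 h2 h3 =>
            Finset.notMem_empty p (hcE ▸ Finset.mem_inter.mpr
              ⟨Finset.mem_inter.mpr ⟨h1, h2⟩, h3⟩)
          have hik : Disjoint i k := Finset.disjoint_left.mpr fun p g1 g2 =>
            hc' p g1 (hy' p g1 g2) g2
          have hjik : j ⊆ i ∪ k := fun p hp => Finset.mem_union.mpr (hx' p hp)
          have hikjE : (i ∪ k) \ j = i \ (j ∪ k) ∪ i ∩ j ∩ k ∪ k \ (i ∪ j) := by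
            ext p
            simp only [Finset.mem_sdiff, Finset.mem_union, Finset.mem_inter, not_or]
            have g1 := hy' p; have g2 := hc' p
            tauto
          rw [if_pos hik, map_smul, lcontr_wedge hinn hcon v j (i ∪ k),
            if_pos hjik, hikjE, if_pos hcE, sub_self, zero_mul, zero_smul,
            sub_eq_zero, smul_smul, smul_smul, smul_smul]
          have hace : i \ (j ∪ k) ∪ i ∩ j ∩ k ∪ k \ (i ∪ j)
              = i \ (j ∪ k) ∪ k \ (i ∪ j) := by rw [hcE, Finset.union_empty]
          rw [hace]
          congr 1
          rw [← pow_add, ← pow_add, ← pow_add]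
          apply neg_one_pow_congr
          -- decompositions
          have hi3 : i = i \ (j ∪ k) := by
            ext p
            simp only [Finset.mem_sdiff, Finset.mem_union, not_or]
            have g1 := hy' p; have g2 := hd' p; have g3 := hc' p
            tauto
          have hj3 : j = (j ∩ k) \ i := by
            ext p
            simp only [Finset.mem_sdiff, Finset.mem_inter]
            have g1 := hx' p; have g2 := hd' p; have g3 := hc' p
            tauto
          have hk3 : k = (j ∩ k) \ i ∪ k \ (i ∪ j) := by
            ext p
            simp only [Finset.mem_sdiff, Finset.mem_union, Finset.mem_inter, not_or]
            have g1 := hy' p; have g3 := hc' p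
            tauto
          have e1 := congrArg (fun s => npairs s (k \ (i ∪ j))) hj3
          have e2 := congrArg (fun s => npairs s (k \ (i ∪ j))) hi3
          have e3 : npairs i k = npairs (i \ (j ∪ k)) ((j ∩ k) \ i)
              + npairs (i \ (j ∪ k)) (k \ (i ∪ j)) := by
            have e3a := congrArg (fun s => npairs s k) hi3
            have e3b := congrArg (fun t => npairs (i \ (j ∪ k)) t) hk3
            rw [npairs_union_right _ _ _ dbe] at e3b
            rw [e3a, e3b]
          have e4 : npairs j (i \ (j ∪ k) ∪ k \ (i ∪ j))
              = npairs ((j ∩ k) \ i) (i \ (j ∪ k))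
              + npairs ((j ∩ k) \ i) (k \ (i ∪ j)) := by
            have e4a := congrArg (fun s => npairs s (i \ (j ∪ k) ∪ k \ (i ∪ j))) hj3
            rw [e4a, npairs_union_right _ _ _ dae]
          have s1 := npairs_add_swap _ _ dab
          have c1 := congrArg Finset.card hi3
          have c2 := congrArg Finset.card hj3
          have hprod : i.card * j.card
              = (i \ (j ∪ k)).card * ((j ∩ k) \ i).card := by rw [c1, c2]
          omega
        · -- d = ∅, c ≠ ∅ : only the first term survives
          obtain ⟨p, hp⟩ := Finset.nonempty_of_ne_empty hcE
          simp only [Finset.mem_inter] at hp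
          have hikn : ¬ Disjoint i k := fun hdis =>
            Finset.disjoint_left.mp hdis hp.1.1 hp.2
          rw [if_neg hikn, map_zero, smul_zero, sub_zero, if_neg hcE, sub_zero,
            smul_smul, hd]
          simp only [Finset.card_empty, Finset.empty_union, zero_add, mul_one, one_mul]
          congr 1
          rw [← pow_add]
          apply neg_one_pow_congr
          have hi4 : i = i \ (j ∪ k) ∪ i ∩ j ∩ k := by
            ext p
            simp only [Finset.mem_sdiff, Finset.mem_union, Finset.mem_inter, not_or]
            have g1 := hy' p; have g2 := hd' p
            tauto
          have hj4 : j = (j ∩ k) \ i ∪ i ∩ j ∩ k := by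
            ext p
            simp only [Finset.mem_sdiff, Finset.mem_union, Finset.mem_inter]
            have g1 := hx' p; have g2 := hd' p
            tauto
          have e1 : npairs j (k \ (i ∪ j)) = npairs ((j ∩ k) \ i) (k \ (i ∪ j))
              + npairs (i ∩ j ∩ k) (k \ (i ∪ j)) := by
            have e1a := congrArg (fun s => npairs s (k \ (i ∪ j))) hj4
            rw [npairs_union_left _ _ _ dbc] at e1a
            exact e1a
          have e2 : npairs i (k \ (i ∪ j)) = npairs (i \ (j ∪ k)) (k \ (i ∪ j))
              + npairs (i ∩ j ∩ k) (k \ (i ∪ j)) := by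
            have e2a := congrArg (fun s => npairs s (k \ (i ∪ j))) hi4
            rw [npairs_union_left _ _ _ dac] at e2a
            exact e2a
          have e3 : npairs (i \ (j ∪ k) ∪ (j ∩ k) \ i) (k \ (i ∪ j))
              = npairs (i \ (j ∪ k)) (k \ (i ∪ j))
              + npairs ((j ∩ k) \ i) (k \ (i ∪ j)) :=
            npairs_union_left _ _ _ dab
          omega
      · -- d ≠ ∅
        obtain ⟨pd, hpd⟩ := Finset.nonempty_of_ne_empty hd
        simp only [Finset.mem_sdiff, Finset.mem_inter] at hpd
        have hjkn : ¬ j ⊆ k := fun hh => hpd.2 (hh hpd.1.2)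
        rw [if_neg hjkn, mul_zero, if_neg hd, zero_sub]
        by_cases hcE : i ∩ j ∩ k = ∅
        · -- c = ∅, d ≠ ∅ : only the second term survives
          have hc' : ∀ p, p ∈ i → p ∈ j → p ∈ k → False := fun p h1 h2 h3 =>
            Finset.notMem_empty p (hcE ▸ Finset.mem_inter.mpr
              ⟨Finset.mem_inter.mpr ⟨h1, h2⟩, h3⟩)
          have hik : Disjoint i k := Finset.disjoint_left.mpr fun p g1 g2 =>
            hc' p g1 (hy' p g1 g2) g2
          have hjik : j ⊆ i ∪ k := fun p hp => Finset.mem_union.mpr (hx' p hp)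
          have hikjE : (i ∪ k) \ j = i \ (j ∪ k) ∪ i ∩ j ∩ k ∪ k \ (i ∪ j) := by
            ext p
            simp only [Finset.mem_sdiff, Finset.mem_union, Finset.mem_inter, not_or]
            have g1 := hy' p; have g2 := hc' p
            tauto
          have hace : i \ (j ∪ k) ∪ i ∩ j ∩ k ∪ k \ (i ∪ j)
              = i \ (j ∪ k) ∪ k \ (i ∪ j) := by rw [hcE, Finset.union_empty]
          rw [if_pos hik, map_smul, lcontr_wedge hinn hcon v j (i ∪ k),
            if_pos hjik, hikjE, if_pos hcE, hace, zero_sub, smul_smul, smul_smul,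
            neg_mul, one_mul, neg_smul, neg_inj]
          congr 1
          rw [← pow_add, ← pow_add]
          apply neg_one_pow_congr
          have hi2 : i = i \ (j ∪ k) ∪ (i ∩ j) \ k := by
            ext p
            simp only [Finset.mem_sdiff, Finset.mem_union, Finset.mem_inter, not_or]
            have g1 := hy' p; have g2 := hc' p
            tauto
          have hj2 : j = (j ∩ k) \ i ∪ (i ∩ j) \ k := by
            ext p
            simp only [Finset.mem_sdiff, Finset.mem_union, Finset.mem_inter]
            have g1 := hx' p; have g2 := hc' p
            tauto
          have hk2 : k = (j ∩ k) \ i ∪ k \ (i ∪ j) := by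
            ext p
            simp only [Finset.mem_sdiff, Finset.mem_union, Finset.mem_inter, not_or]
            have g1 := hy' p; have g2 := hc' p
            tauto
          have e1 : npairs i k
              = npairs (i \ (j ∪ k)) ((j ∩ k) \ i) + npairs (i \ (j ∪ k)) (k \ (i ∪ j))
              + (npairs ((i ∩ j) \ k) ((j ∩ k) \ i) + npairs ((i ∩ j) \ k) (k \ (i ∪ j))) := by
            have ea := congrArg (fun s => npairs s k) hi2
            rw [npairs_union_left _ _ _ dad] at ea
            have eb := congrArg (fun t => npairs (i \ (j ∪ k)) t) hk2
            have ec := congrArg (fun t => npairs ((i ∩ j) \ k) t) hk2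
            rw [npairs_union_right _ _ _ dbe] at eb ec
            rw [ea, eb, ec]
          have e2 : npairs j (i \ (j ∪ k) ∪ k \ (i ∪ j))
              = npairs ((j ∩ k) \ i) (i \ (j ∪ k)) + npairs ((j ∩ k) \ i) (k \ (i ∪ j))
              + (npairs ((i ∩ j) \ k) (i \ (j ∪ k)) + npairs ((i ∩ j) \ k) (k \ (i ∪ j))) := by
            have ea := congrArg (fun s => npairs s (i \ (j ∪ k) ∪ k \ (i ∪ j))) hj2
            rw [npairs_union_left _ _ _ dbd] at ea
            rw [ea, npairs_union_right _ _ _ dae, npairs_union_right _ _ _ dae]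
          have e3 : npairs (i \ (j ∪ k) ∪ (j ∩ k) \ i) ((i ∩ j) \ k ∪ k \ (i ∪ j))
              = npairs (i \ (j ∪ k)) ((i ∩ j) \ k) + npairs (i \ (j ∪ k)) (k \ (i ∪ j))
              + (npairs ((j ∩ k) \ i) ((i ∩ j) \ k) + npairs ((j ∩ k) \ i) (k \ (i ∪ j))) := by
            rw [npairs_union_left _ _ _ dab, npairs_union_right _ _ _ dde,
              npairs_union_right _ _ _ dde]
          have s1 := npairs_add_swap _ _ dab
          have s2 := npairs_add_swap _ _ dad
          have s3 := npairs_add_swap _ _ dbd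
          have c1 : i.card = (i \ (j ∪ k)).card + ((i ∩ j) \ k).card := by
            rw [congrArg Finset.card hi2, Finset.card_union_of_disjoint dad]
          have c2 : j.card = ((j ∩ k) \ i).card + ((i ∩ j) \ k).card := by
            rw [congrArg Finset.card hj2, Finset.card_union_of_disjoint dbd]
          have hprod : i.card * j.card
              = (i \ (j ∪ k)).card * ((j ∩ k) \ i).card
              + (i \ (j ∪ k)).card * ((i ∩ j) \ k).card
              + ((j ∩ k) \ i).card * ((i ∩ j) \ k).card
              + ((i ∩ j) \ k).card * ((i ∩ j) \ k).card := by
            rw [c1, c2]; ring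
          have hdd : ((i ∩ j) \ k).card * ((i ∩ j) \ k).card % 2
              = ((i ∩ j) \ k).card % 2 := by
            rcases Nat.mod_two_eq_zero_or_one ((i ∩ j) \ k).card with h | h <;>
              rw [Nat.mul_mod, h] <;> omega
          omega
        · -- c ≠ ∅, d ≠ ∅ : everything vanishes
          obtain ⟨p, hp⟩ := Finset.nonempty_of_ne_empty hcE
          simp only [Finset.mem_inter] at hp
          have hikn : ¬ Disjoint i k := fun hdis =>
            Finset.disjoint_left.mp hdis hp.1.1 hp.2
          rw [if_neg hikn, map_zero, smul_zero, neg_zero, if_neg hcE, sub_self,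
            zero_mul, zero_smul]
    · -- y ≠ ∅ : everything vanishes
      obtain ⟨p, hp⟩ := Finset.nonempty_of_ne_empty hy
      simp only [Finset.mem_sdiff, Finset.mem_inter] at hp
      obtain ⟨⟨hpi, hpk⟩, hpj⟩ := hp
      have hikn : ¬ Disjoint i k := fun hdis => Finset.disjoint_left.mp hdis hpi hpk
      rw [if_neg hikn, map_zero, smul_zero, sub_zero]
      have hun : (j \ (i ∪ k)) ∪ ((i ∩ k) \ j) ≠ ∅ := fun hh =>
        hy (Finset.union_eq_empty.mp hh).2
      rw [if_neg hun, zero_mul, zero_mul, zero_smul]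
      by_cases hjk : j ⊆ k
      · have h1 : ¬ Disjoint i (k \ j) := fun hdis =>
          Finset.disjoint_left.mp hdis hpi (Finset.mem_sdiff.mpr ⟨hpk, hpj⟩)
        rw [if_pos hjk, mul_smul_comm, wedge_mul_wedge (⇑v) i (k \ j), if_neg h1,
          smul_zero]
      · rw [if_neg hjk, mul_zero]
  · -- x ≠ ∅ : everything vanishes
    obtain ⟨p, hp⟩ := Finset.nonempty_of_ne_empty hx
    simp only [Finset.mem_sdiff, Finset.mem_union] at hp
    obtain ⟨hpj, hpik⟩ := hp
    have hjkn : ¬ j ⊆ k := fun hh => hpik (Or.inr (hh hpj))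
    rw [if_neg hjkn, mul_zero]
    have hun : (j \ (i ∪ k)) ∪ ((i ∩ k) \ j) ≠ ∅ := fun hh =>
      hx (Finset.union_eq_empty.mp hh).1
    rw [if_neg hun, zero_mul, zero_mul, zero_smul]
    by_cases hik : Disjoint i k
    · have hjikn : ¬ j ⊆ i ∪ k := fun hh => hpik (Finset.mem_union.mp (hh hpj))
      rw [if_pos hik, map_smul, lcontr_wedge hinn hcon v j (i ∪ k), if_neg hjikn,
        smul_zero, smul_zero, zero_sub, neg_zero]
    · rw [if_neg hik, map_zero, smul_zero, zero_sub, neg_zero]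

end SC

/-- Action of the supercommutator `⦃a_i†, a_j⦄` on a basis
multivector `v_k`. -/
theorem supercommutator_on_basis_multivector {X : Type*} [NormedAddCommGroup X]
    [InnerProductSpace ℝ X] [FiniteDimensional ℝ X]
    (innE : ExteriorAlgebra ℝ X →ₗ[ℝ] ExteriorAlgebra ℝ X →ₗ[ℝ] ℝ)
    (lcontr : ExteriorAlgebra ℝ X →ₗ[ℝ] ExteriorAlgebra ℝ X →ₗ[ℝ] ExteriorAlgebra ℝ X)
    (hinn : InnerOK innE) (hc : ContrOK innE lcontr)
    {n : ℕ} (v : OrthonormalBasis (Fin n) ℝ X) (i j k : Finset (Fin n)) :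
    let a := i \ (j ∪ k); let b := (j ∩ k) \ i; let c := i ∩ j ∩ k
    let d := (i ∩ j) \ k; let e := k \ (i ∪ j); let x := j \ (i ∪ k)
    let y := (i ∩ k) \ j
    (wedgeOf (⇑v) i * lcontr (wedgeOf (⇑v) j) (wedgeOf (⇑v) k) -
        (-1 : ℝ) ^ (i.card * j.card) •
          lcontr (wedgeOf (⇑v) j) (wedgeOf (⇑v) i * wedgeOf (⇑v) k) =
      ((if x ∪ y = ∅ then (1 : ℝ) else 0) *
        ((if d = ∅ then (1 : ℝ) else 0) - (if c = ∅ then (1 : ℝ) else 0)) *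
        (-1 : ℝ) ^ (d.card + npairs (a ∪ b) (d ∪ e))) • wedgeOf (⇑v) (a ∪ c ∪ e)) ∧
    -- in particular, the supercommutator annihilates `v_k` unless
    -- `x = y = ∅` and exactly one of `c`, `d` is empty
    (¬(x = ∅ ∧ y = ∅ ∧ Xor' (c = ∅) (d = ∅)) →
      wedgeOf (⇑v) i * lcontr (wedgeOf (⇑v) j) (wedgeOf (⇑v) k) -
        (-1 : ℝ) ^ (i.card * j.card) •
          lcontr (wedgeOf (⇑v) j) (wedgeOf (⇑v) i * wedgeOf (⇑v) k) = 0) := by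
  intro a b c d e x y
  have key := SC.key_formula hinn hc v i j k
  refine ⟨key, fun hnot => ?_⟩
  rw [key]
  by_cases h1 : j \ (i ∪ k) = ∅
  · by_cases h2 : (i ∩ k) \ j = ∅
    · have h3 : ¬ Xor' (i ∩ j ∩ k = ∅) ((i ∩ j) \ k = ∅) := fun hX => hnot ⟨h1, h2, hX⟩
      by_cases hc4 : i ∩ j ∩ k = ∅ <;> by_cases hd4 : (i ∩ j) \ k = ∅
      · rw [if_pos hd4, if_pos hc4, sub_self, mul_zero, zero_mul, zero_smul]
      · exact absurd (Or.inl ⟨hc4, hd4⟩) h3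
      · exact absurd (Or.inr ⟨hd4, hc4⟩) h3
      · rw [if_neg hd4, if_neg hc4, sub_self, mul_zero, zero_mul, zero_smul]
    · have hun : (j \ (i ∪ k)) ∪ ((i ∩ k) \ j) ≠ ∅ := fun hh =>
        h2 (Finset.union_eq_empty.mp hh).2
      rw [if_neg hun, zero_mul, zero_mul, zero_smul]
  · have hun : (j \ (i ∪ k)) ∪ ((i ∩ k) \ j) ≠ ∅ := fun hh =>
      h1 (Finset.union_eq_empty.mp hh).1
    rw [if_neg hun, zero_mul, zero_mul, zero_smul]

end
end
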